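/- arXiv:1306.0969 — 2 statements merged into one kernel-verified Lean document; each statement's English description precedes it below -/
import Mathlib

section
/- Let B = G − λγ₀ h h^H − θ I where G is Hermitian PSD with rank(G) ≤ K, λγ₀ ≥ 0, θ > 0. If Q ⪰ 0 satisfies B Q = 0 and additionally Tr(h h^H Q) contributes so that on the column space of Q we have G q = (λγ₀ h h^H + θ I) q for every column q of Q, then rank(Q) ≤ min(K+1, M); moreover if Q's column space is orthogonal to h, then rank(Q) ≤ min(K, M). -/
open Matrix ComplexOrder

lemma myrank_add_le {M : ℕ} (A B : Matrix (Fin M) (Fin M) ℂ) :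
    (A + B).rank ≤ A.rank + B.rank := by
  rw [Matrix.rank, Matrix.rank, Matrix.rank]
  have hle : LinearMap.range (A + B).mulVecLin ≤
      LinearMap.range A.mulVecLin ⊔ LinearMap.range B.mulVecLin := by
    rintro _ ⟨x, rfl⟩
    rw [Matrix.mulVecLin_add]
    exact Submodule.add_mem_sup ⟨x, rfl⟩ ⟨x, rfl⟩
  exact (Submodule.finrank_mono hle).trans
    (Submodule.finrank_add_le_finrank_add_finrank _ _)

lemma myrank_vecMulVec_le {M N : ℕ} (w : Fin M → ℂ) (v : Fin N → ℂ) :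
    (vecMulVec w v).rank ≤ 1 := by
  rw [Matrix.vecMulVec_eq (Fin 1)]
  exact (Matrix.rank_mul_le_left _ _).trans
    ((Matrix.rank_le_card_width _).trans (by simp))

lemma myrank_sum_le {M K : ℕ} (f : Fin K → Matrix (Fin M) (Fin M) ℂ)
    (hf : ∀ k, (f k).rank ≤ 1) (s : Finset (Fin K)) :
    (∑ k ∈ s, f k).rank ≤ s.card := by
  induction s using Finset.induction with
  | empty => simp [Matrix.rank_zero]
  | insert _ _ hx ih =>
    rw [Finset.sum_insert hx, Finset.card_insert_of_notMem hx]
    exact (myrank_add_le _ _).trans (by rw [add_comm]; exact add_le_add ih (hf _))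

/-- Rank bound for the optimal Q of the SDR: with B = G − λγ₀ h hᴴ − θI, G PSD of
rank ≤ K, θ > 0, any PSD Q with B Q = 0 has rank ≤ min(K+1, M); and if moreover
the column space of Q is orthogonal to h, then rank(Q) ≤ min(K, M). -/
theorem stmt8 {M K : ℕ} (hM : 1 ≤ M) (hK : 1 ≤ K)
    (β : Fin K → ℝ) (hβ : ∀ k, 0 ≤ β k) (g : Fin K → Fin M → ℂ)
    (G : Matrix (Fin M) (Fin M) ℂ)
    (hG : G = ∑ k, (β k : ℂ) • vecMulVec (g k) (star (g k)))
    (h : Fin M → ℂ) (lg θ : ℝ) (hlg : 0 ≤ lg) (hθ : 0 < θ)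
    (B : Matrix (Fin M) (Fin M) ℂ)
    (hB : B = G - (lg : ℂ) • vecMulVec h (star h) - (θ : ℂ) • 1)
    (Q : Matrix (Fin M) (Fin M) ℂ) (hQ : Q.PosSemidef) (hBQ : B * Q = 0) :
    Q.rank ≤ min (K + 1) M ∧
    ((∀ x : Fin M → ℂ, star h ⬝ᵥ Q.mulVec x = 0) → Q.rank ≤ min K M) := by
  have hθC : (θ : ℂ) ≠ 0 := by exact_mod_cast ne_of_gt hθ
  -- rewrite each smul vecMulVec as a vecMulVec
  have hGrank : G.rank ≤ K := by
    have : ∀ k : Fin K, ((β k : ℂ) • vecMulVec (g k) (star (g k))).rank ≤ 1 := by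
      intro k
      have : (β k : ℂ) • vecMulVec (g k) (star (g k))
          = vecMulVec ((β k : ℂ) • g k) (star (g k)) := by
        ext i j; simp [vecMulVec_apply, mul_assoc]
      rw [this]; exact myrank_vecMulVec_le _ _
    simpa using (hG ▸ myrank_sum_le _ this Finset.univ).trans (by simp)
  have hQM : Q.rank ≤ M := (Matrix.rank_le_card_width Q).trans (by simp)
  -- key identity
  have key : (G - (lg : ℂ) • vecMulVec h (star h)) * Q = (θ : ℂ) • Q := by
    have h0 := hBQ
    rw [hB, Matrix.sub_mul, sub_eq_zero, Matrix.smul_mul, Matrix.one_mul] at h0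
    exact h0
  have hQeq : Q = (G - (lg : ℂ) • vecMulVec h (star h)) * ((θ : ℂ)⁻¹ • Q) := by
    rw [Matrix.mul_smul, key, smul_smul, inv_mul_cancel₀ hθC, one_smul]
  constructor
  · have h1 : Q.rank ≤ (G - (lg : ℂ) • vecMulVec h (star h)).rank := by
      conv_lhs => rw [hQeq]
      exact Matrix.rank_mul_le_left _ _
    have h2 : (G - (lg : ℂ) • vecMulVec h (star h)).rank ≤ K + 1 := by
      rw [sub_eq_add_neg]
      refine (myrank_add_le _ _).trans (add_le_add hGrank ?_)
      have : -((lg : ℂ) • vecMulVec h (star h))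
          = vecMulVec ((-(lg : ℂ)) • h) (star h) := by
        ext i j; simp [vecMulVec_apply]; ring
      rw [this]; exact myrank_vecMulVec_le _ _
    exact le_min (h1.trans h2) hQM
  · intro horth
    have hvv : vecMulVec h (star h) * Q = 0 := by
      ext i j
      simp only [Matrix.mul_apply, vecMulVec_apply, Matrix.zero_apply]
      have hz : (∑ k, star h k * Q k j) = 0 := by
        simpa [dotProduct, Matrix.mulVec, Pi.single_apply, mul_ite]
          using horth (Pi.single j 1)
      calc ∑ k, h i * star h k * Q k j = h i * ∑ k, star h k * Q k j := by
            rw [Finset.mul_sum]; congr 1; ext k; ring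
        _ = 0 := by rw [hz, mul_zero]
    have hQeq2 : Q = G * ((θ : ℂ)⁻¹ • Q) := by
      rw [Matrix.mul_smul]
      have : G * Q = (θ : ℂ) • Q := by
        have := key
        rw [Matrix.sub_mul, Matrix.smul_mul, hvv, smul_zero, sub_zero] at this
        exact this
      rw [this, smul_smul, inv_mul_cancel₀ hθC, one_smul]
    refine le_min ?_ hQM
    calc Q.rank = (G * ((θ : ℂ)⁻¹ • Q)).rank := by rw [← hQeq2]
      _ ≤ G.rank := Matrix.rank_mul_le_left _ _
      _ ≤ K := hGrank
end

section
/- Suppose v₀ = √p₀ η and w_i = √p_i η for a fixed unit vector η with p₀ + Σ_i p_i = P̄, p_i ≥ 0. Then the secrecy rate r₀ = min_k [log₂(1 + p₀|η^H h|²/(Σ_i p_i |η^H h|² + σ₀²)) − log₂(1 + p₀|η^H g_k|²/(Σ_i p_i |η^H g_k|² + σ_k²))] is maximized over the power split by p₀ = P̄, p_i = 0 for all i, with maximum value min_k [log₂(1 + P̄|η^H h|²/σ₀²) − log₂(1 + P̄|η^H g_k|²/σ_k²)], provided this value is nonnegative. -/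
open Matrix

lemma key_ineq (x y σ0 σk q Pb : ℝ) (hx : 0 ≤ x) (hy : 0 ≤ y) (h0 : 0 < σ0)
    (hk : 0 < σk) (hq0 : 0 ≤ q) (hP : 0 < Pb) (hxy : y * σ0 ≤ x * σk) :
    Real.logb 2 (1 + (Pb - q) * x / (q * x + σ0))
      - Real.logb 2 (1 + (Pb - q) * y / (q * y + σk))
    ≤ Real.logb 2 (1 + Pb * x / σ0) - Real.logb 2 (1 + Pb * y / σk) := by
  have hdx : 0 < q * x + σ0 := by positivity
  have hdy : 0 < q * y + σk := by positivity
  have e1 : 1 + (Pb - q) * x / (q * x + σ0) = (Pb * x + σ0) / (q * x + σ0) := by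
    field_simp; ring
  have e2 : 1 + (Pb - q) * y / (q * y + σk) = (Pb * y + σk) / (q * y + σk) := by
    field_simp; ring
  have e3 : 1 + Pb * x / σ0 = (Pb * x + σ0) / σ0 := by field_simp; ring
  have e4 : 1 + Pb * y / σk = (Pb * y + σk) / σk := by field_simp; ring
  have hA : 0 < Pb * x + σ0 := by positivity
  have hB : 0 < Pb * y + σk := by positivity
  rw [e1, e2, e3, e4, Real.logb_div hA.ne' hdx.ne', Real.logb_div hB.ne' hdy.ne',
    Real.logb_div hA.ne' h0.ne', Real.logb_div hB.ne' hk.ne']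
  have h1 : Real.logb 2 (σ0 * (q * y + σk)) ≤ Real.logb 2 ((q * x + σ0) * σk) := by
    apply Real.logb_le_logb_of_le one_lt_two (by positivity)
    nlinarith
  rw [Real.logb_mul h0.ne' hdy.ne', Real.logb_mul hdx.ne' hk.ne'] at h1
  linarith

/-- When all beams are aligned to the same unit direction η with total power P̄,
the secrecy rate is maximized by allocating all power to the information beam:
p₀ = P̄ gives min_k [log₂(1+P̄|ηᴴh|²/σ₀²) − log₂(1+P̄|ηᴴg_k|²/σ_k²)], provided
this value is nonnegative. -/
theorem stmt19 {M K d : ℕ} (hM : 1 ≤ M) (hK : 1 ≤ K) (hd : 1 ≤ d)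
    (η h : Fin M → ℂ) (g : Fin K → Fin M → ℂ) (hη : star η ⬝ᵥ η = 1)
    (σ0 : ℝ) (σ : Fin K → ℝ) (hσ0 : 0 < σ0) (hσ : ∀ k, 0 < σ k)
    (Pb : ℝ) (hP : 0 < Pb)
    (r : ℝ → ℝ)
    (hr : r = fun p0 => ⨅ k : Fin K,
      (Real.logb 2 (1 + p0 * ‖star η ⬝ᵥ h‖ ^ 2 /
          ((Pb - p0) * ‖star η ⬝ᵥ h‖ ^ 2 + σ0))
        - Real.logb 2 (1 + p0 * ‖star η ⬝ᵥ g k‖ ^ 2 /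
          ((Pb - p0) * ‖star η ⬝ᵥ g k‖ ^ 2 + σ k))))
    (hnonneg : 0 ≤ r Pb) :
    IsGreatest (r '' Set.Icc 0 Pb) (r Pb) ∧
    r Pb = ⨅ k : Fin K,
      (Real.logb 2 (1 + Pb * ‖star η ⬝ᵥ h‖ ^ 2 / σ0)
        - Real.logb 2 (1 + Pb * ‖star η ⬝ᵥ g k‖ ^ 2 / σ k)) := by
  have hKne : Nonempty (Fin K) := Fin.pos_iff_nonempty.mp hK
  set x : ℝ := ‖star η ⬝ᵥ h‖ ^ 2 with hxdef
  set y : Fin K → ℝ := fun k => ‖star η ⬝ᵥ g k‖ ^ 2 with hydef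
  have hx : 0 ≤ x := by positivity
  have hy : ∀ k, 0 ≤ y k := fun k => by positivity
  have heq : r Pb = ⨅ k : Fin K,
      (Real.logb 2 (1 + Pb * x / σ0) - Real.logb 2 (1 + Pb * y k / σ k)) := by
    rw [hr]
    simp only [sub_self, zero_mul, zero_add]
    rfl
  -- each eavesdropper term at Pb is nonnegative, hence y k * σ0 ≤ x * σ k
  have hxy : ∀ k, y k * σ0 ≤ x * σ k := by
    intro k
    have hle : r Pb ≤ Real.logb 2 (1 + Pb * x / σ0) - Real.logb 2 (1 + Pb * y k / σ k) := by
      rw [heq]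
      exact ciInf_le (Set.finite_range _).bddBelow k
    have h0 : 0 ≤ Real.logb 2 (1 + Pb * x / σ0) - Real.logb 2 (1 + Pb * y k / σ k) :=
      le_trans hnonneg hle
    have hposy : (0:ℝ) < 1 + Pb * y k / σ k := by
      have := div_nonneg (mul_nonneg hP.le (hy k)) (hσ k).le; linarith
    have hposx : (0:ℝ) < 1 + Pb * x / σ0 := by positivity
    have := (Real.logb_le_logb one_lt_two hposy hposx).mp (by linarith)
    have hd : Pb * y k / σ k ≤ Pb * x / σ0 := by linarith
    rw [div_le_div_iff₀ (hσ k) hσ0] at hd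
    nlinarith [hσ k, hσ0]
  constructor
  · constructor
    · exact ⟨Pb, ⟨le_of_lt hP, le_refl Pb⟩, rfl⟩
    · rintro z ⟨p0, hp0, rfl⟩
      rw [hr]
      apply ciInf_mono (Set.finite_range _).bddBelow
      intro k
      have := key_ineq x (y k) σ0 (σ k) (Pb - p0) Pb hx (hy k) hσ0 (hσ k)
        (by linarith [hp0.2]) hP (hxy k)
      have hc : Pb - (Pb - p0) = p0 := by ring
      rw [hc] at this
      simpa [sub_self, zero_mul, zero_add] using this
  · exact heq
end
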